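/- Let S be an ordered semigroup satisfying axioms O1–O6, and let λ₁, λ₂, λ₃ be functionals on S. Then (λ₁ ∧ λ₂) + λ₃ = (λ₁ + λ₃) ∧ (λ₂ + λ₃), where ∧ denotes the greatest lower bound in F(S) and + is pointwise addition of functionals. -/

import Mathlib

open scoped ENNReal

/-- `CC s t` : `s` is (sequentially) compactly contained in `t`, written `s ≪ t`. -/
def CC {S : Type*} [AddCommMonoid S] [PartialOrder S] (s t : S) : Prop :=
  ∀ u : ℕ → S, Monotone u → ∀ x : S, IsLUB (Set.range u) x → t ≤ x → ∃ n, s ≤ u n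

/-- An ordered semigroup (positive, with translation invariant order) satisfying axioms O1-O5. -/
structure CuO5 (S : Type*) [AddCommMonoid S] [PartialOrder S] : Prop where
  addRightMono : ∀ {s t : S}, s ≤ t → ∀ r : S, s + r ≤ t + r
  zeroLe : ∀ s : S, 0 ≤ s
  O1 : ∀ u : ℕ → S, Monotone u → ∃ x : S, IsLUB (Set.range u) x
  O2 : ∀ s : S, ∃ u : ℕ → S, (∀ n, CC (u n) (u (n + 1))) ∧ IsLUB (Set.range u) s
  O3 : ∀ {s₁ t₁ s₂ t₂ : S}, CC s₁ t₁ → CC s₂ t₂ → CC (s₁ + s₂) (t₁ + t₂)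
  O4 : ∀ u v : ℕ → S, Monotone u → Monotone v → ∀ x y : S,
    IsLUB (Set.range u) x → IsLUB (Set.range v) y →
    IsLUB (Set.range fun n => u n + v n) (x + y)
  O5 : ∀ {s' s t : S}, CC s' s → s ≤ t → ∃ r : S, s' + r ≤ t ∧ t ≤ s + r

/-- Axioms O1-O6. -/
structure CuO6 (S : Type*) [AddCommMonoid S] [PartialOrder S] extends CuO5 S : Prop where
  O6 : ∀ {s r t : S}, s ≤ r + t → ∀ {s' : S}, CC s' s →
    ∃ r' t' : S, s' ≤ r' + t' ∧ r' ≤ r ∧ r' ≤ s ∧ t' ≤ t ∧ t' ≤ s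

/-- A functional on `S`: additive, order preserving, zero preserving map to `[0,∞]`
preserving suprema of increasing sequences. -/
structure IsFunctional {S : Type*} [AddCommMonoid S] [PartialOrder S] (l : S → ℝ≥0∞) : Prop where
  map_zero : l 0 = 0
  map_add : ∀ s t : S, l (s + t) = l s + l t
  mono : ∀ {s t : S}, s ≤ t → l s ≤ l t
  map_sup : ∀ u : ℕ → S, Monotone u → ∀ x : S, IsLUB (Set.range u) x → l x = ⨆ n, l (u n)

/-- Real multiplication on `S` : a map `(0,∞] × S → S` additive, order preserving and
sup-(of increasing sequences)-preserving in each variable, with `1 · s = s`.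
Scalars are elements of `ℝ≥0∞` required to be positive. -/
structure RealMul (S : Type*) [AddCommMonoid S] [PartialOrder S] where
  smul : ℝ≥0∞ → S → S
  add_left : ∀ {a b : ℝ≥0∞}, 0 < a → 0 < b → ∀ s : S, smul (a + b) s = smul a s + smul b s
  add_right : ∀ {a : ℝ≥0∞}, 0 < a → ∀ s t : S, smul a (s + t) = smul a s + smul a t
  mono_left : ∀ {a b : ℝ≥0∞}, 0 < a → a ≤ b → ∀ s : S, smul a s ≤ smul b s
  mono_right : ∀ {a : ℝ≥0∞}, 0 < a → ∀ {s t : S}, s ≤ t → smul a s ≤ smul a t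
  sup_left : ∀ u : ℕ → ℝ≥0∞, Monotone u → 0 < u 0 → ∀ s : S,
    IsLUB (Set.range fun n => smul (u n) s) (smul (⨆ n, u n) s)
  sup_right : ∀ {a : ℝ≥0∞}, 0 < a → ∀ u : ℕ → S, Monotone u → ∀ x : S,
    IsLUB (Set.range u) x → IsLUB (Set.range fun n => smul a (u n)) (smul a x)
  one_smul : ∀ s : S, smul 1 s = s

/-- `D` is a dense subset of `S`: every element of `S` is the supremum of a rapidly
increasing sequence of elements of `D`. -/
def IsDenseSub {S : Type*} [AddCommMonoid S] [PartialOrder S] (D : Set S) : Prop :=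
  ∀ s : S, ∃ u : ℕ → S, (∀ n, u n ∈ D) ∧ (∀ n, CC (u n) (u (n + 1))) ∧ IsLUB (Set.range u) s

/-- `m` is the least upper bound of the functionals `l₁` and `l₂` in `F(S)`
(pointwise order). -/
def IsFSup {S : Type*} [AddCommMonoid S] [PartialOrder S] (l₁ l₂ m : S → ℝ≥0∞) : Prop :=
  IsFunctional m ∧ (∀ s, l₁ s ≤ m s) ∧ (∀ s, l₂ s ≤ m s) ∧
    ∀ d : S → ℝ≥0∞, IsFunctional d → (∀ s, l₁ s ≤ d s) → (∀ s, l₂ s ≤ d s) → ∀ s, m s ≤ d s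

/-- `m` is the greatest lower bound of the functionals `l₁` and `l₂` in `F(S)`
(pointwise order). -/
def IsFInf {S : Type*} [AddCommMonoid S] [PartialOrder S] (l₁ l₂ m : S → ℝ≥0∞) : Prop :=
  IsFunctional m ∧ (∀ s, m s ≤ l₁ s) ∧ (∀ s, m s ≤ l₂ s) ∧
    ∀ d : S → ℝ≥0∞, IsFunctional d → (∀ s, d s ≤ l₁ s) → (∀ s, d s ≤ l₂ s) → ∀ s, d s ≤ m s

/-- An isomorphism of ordered semigroups between `S` and the extended natural numbers. -/
def IsOrdSemigroupIso {S : Type*} [AddCommMonoid S] [PartialOrder S] (e : S ≃ ℕ∞) : Prop :=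
  (∀ a b : S, e (a + b) = e a + e b) ∧ e 0 = 0 ∧ ∀ a b : S, a ≤ b ↔ e a ≤ e b
section AuxCC

variable {S : Type*} [AddCommMonoid S] [PartialOrder S]

lemma cc_le' {s t : S} (h : CC s t) : s ≤ t := by
  obtain ⟨n, hn⟩ := h (fun _ => t) monotone_const t
    (by rw [Set.range_const]; exact isLUB_singleton) le_rfl
  exact hn

lemma cc_of_le_cc' {r s t : S} (hle : r ≤ s) (h : CC s t) : CC r t := fun u hu x hx hxt =>
  (h u hu x hx hxt).imp fun _ hn => hle.trans hn

lemma cc_of_cc_le' {s t t' : S} (h : CC s t) (hle : t ≤ t') : CC s t' := fun u hu x hx hxt =>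
  h u hu x hx (hle.trans hxt)

lemma cc_zero' (hS : CuO5 S) (t : S) : CC 0 t := fun u _ _ _ _ => ⟨0, hS.zeroLe _⟩

lemma cc_interp' (hS : CuO5 S) {s x : S} (h : CC s x) : ∃ c, CC s c ∧ CC c x := by
  obtain ⟨u, hu, hx⟩ := hS.O2 x
  have hmono : Monotone u := monotone_nat_of_le_succ fun n => cc_le' (hu n)
  obtain ⟨n, hn⟩ := h u hmono x hx le_rfl
  exact ⟨u (n+1), cc_of_le_cc' hn (hu n), cc_of_cc_le' (hu (n+1)) (hx.1 ⟨n+2, rfl⟩)⟩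

lemma add_le_add_S (hS : CuO5 S) {a b c d : S} (h1 : a ≤ b) (h2 : c ≤ d) : a + c ≤ b + d := by
  calc a + c ≤ b + c := hS.addRightMono h1 c
    _ = c + b := add_comm _ _
    _ ≤ d + b := hS.addRightMono h2 b
    _ = b + d := add_comm _ _

lemma le_add_left_S (hS : CuO5 S) (a b : S) : b ≤ a + b := by
  have := hS.addRightMono (hS.zeroLe a) b
  rwa [zero_add] at this

lemma le_add_right_S (hS : CuO5 S) (a b : S) : a ≤ a + b := by
  rw [add_comm]; exact le_add_left_S hS b a

lemma func_le_of_cc' (hS : CuO5 S) {l : S → ℝ≥0∞} (hl : IsFunctional l) {u : S} {X : ℝ≥0∞}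
    (h : ∀ u', CC u' u → l u' ≤ X) : l u ≤ X := by
  obtain ⟨w, hw, hlub⟩ := hS.O2 u
  have hmono : Monotone w := monotone_nat_of_le_succ fun n => cc_le' (hw n)
  rw [hl.map_sup w hmono u hlub]
  exact iSup_le fun n => h _ (cc_of_cc_le' (hw n) (hlub.1 ⟨n+1, rfl⟩))

end AuxCC

lemma ennreal_split' {a b c e : ℝ≥0∞} (hba : b ≤ a) (hec : e ≤ c) (hb : b ≠ ⊤) (he : e ≠ ⊤) :
    (a + c) - (b + e) = (a - b) + (c - e) := by
  apply ENNReal.sub_eq_of_eq_add (ENNReal.add_ne_top.2 ⟨hb, he⟩)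
  conv_lhs => rw [← tsub_add_cancel_of_le hba, ← tsub_add_cancel_of_le hec]
  ring

/-- `(λ₁ ∧ λ₂) + λ₃ = (λ₁ + λ₃) ∧ (λ₂ + λ₃)` in F(S). -/
theorem inf_add_distrib {S : Type*} [AddCommMonoid S] [PartialOrder S]
    (hS : CuO6 S) (l₁ l₂ l₃ : S → ℝ≥0∞)
    (h₁ : IsFunctional l₁) (h₂ : IsFunctional l₂) (h₃ : IsFunctional l₃)
    (m m' : S → ℝ≥0∞) (hm : IsFInf l₁ l₂ m)
    (hm' : IsFInf (fun s => l₁ s + l₃ s) (fun s => l₂ s + l₃ s) m') :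
    ∀ s : S, m s + l₃ s = m' s := by
  obtain ⟨hm'F, hm'1, hm'2, hm'max⟩ := hm'
  obtain ⟨hmF, hml1, hml2, hmmax⟩ := hm
  have hS5 := hS.toCuO5
  -- λ₃ ≤ m'
  have hl3m' : ∀ s : S, l₃ s ≤ m' s :=
    hm'max l₃ h₃ (fun s => self_le_add_left _ _) (fun s => self_le_add_left _ _)
  -- easy direction : m + λ₃ ≤ m'
  have hsumF : IsFunctional (fun s => m s + l₃ s) := by
    refine ⟨?_, ?_, ?_, ?_⟩
    · rw [hmF.map_zero, h₃.map_zero, add_zero]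
    · intro s t; rw [hmF.map_add, h₃.map_add]; ring
    · intro s t hst; exact add_le_add (hmF.mono hst) (h₃.mono hst)
    · intro u hu x hx
      rw [hmF.map_sup u hu x hx, h₃.map_sup u hu x hx]
      exact ENNReal.iSup_add_iSup_of_monotone (fun i j hij => hmF.mono (hu hij))
        (fun i j hij => h₃.mono (hu hij))
  have heasy : ∀ s : S, m s + l₃ s ≤ m' s :=
    hm'max _ hsumF (fun s => add_le_add_left (hml1 s) _) (fun s => add_le_add_left (hml2 s) _)
  -- the candidate functional d
  let g : S → ℝ≥0∞ := fun u => m' u - l₃ u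
  let d : S → ℝ≥0∞ := fun v => ⨆ p : {x // CC x v}, g p.1
  have hgle : ∀ {p v : S}, CC p v → g p ≤ d v := fun {p v} hpv =>
    le_iSup_of_le (⟨p, hpv⟩ : {x // CC x v}) le_rfl
  have hdmono : ∀ {a b : S}, a ≤ b → d a ≤ d b := fun {a b} hab =>
    iSup_le fun p => hgle (cc_of_cc_le' p.2 hab)
  have hd1 : ∀ v, d v ≤ l₁ v := fun v =>
    iSup_le fun p => (tsub_le_iff_right.mpr (hm'1 p.1)).trans (h₁.mono (cc_le' p.2))
  have hd2 : ∀ v, d v ≤ l₂ v := fun v =>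
    iSup_le fun p => (tsub_le_iff_right.mpr (hm'2 p.1)).trans (h₂.mono (cc_le' p.2))
  have hmd : ∀ v, m' v ≤ d v + l₃ v := by
    intro v
    refine func_le_of_cc' hS5 hm'F fun u' hu' => ?_
    calc m' u' ≤ (m' u' - l₃ u') + l₃ u' := le_tsub_add
      _ ≤ d v + l₃ v := add_le_add (hgle hu') (h₃.mono (cc_le' hu'))
  -- growth lemma via O5
  have hG : ∀ {u v : S}, u ≤ v → m' u + (l₃ v - l₃ u) ≤ m' v := by
    intro u v huv
    obtain ⟨w, hw, hlub⟩ := hS5.O2 u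
    have hwm : Monotone w := monotone_nat_of_le_succ fun n => cc_le' (hw n)
    rw [hm'F.map_sup w hwm u hlub, ENNReal.iSup_add]
    refine iSup_le fun k => ?_
    have hku : CC (w k) u := cc_of_cc_le' (hw k) (hlub.1 ⟨k+1, rfl⟩)
    obtain ⟨c, hc1, hc2⟩ := hS5.O5 hku huv
    have h3c : l₃ v - l₃ u ≤ l₃ c := by
      rw [tsub_le_iff_right]
      calc l₃ v ≤ l₃ (u + c) := h₃.mono hc2
        _ = l₃ u + l₃ c := h₃.map_add u c
        _ = l₃ c + l₃ u := add_comm _ _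
    calc m' (w k) + (l₃ v - l₃ u) ≤ m' (w k) + m' c :=
          add_le_add_right (h3c.trans (hl3m' c)) _
      _ = m' (w k + c) := (hm'F.map_add _ _).symm
      _ ≤ m' v := hm'F.mono hc1
  -- monotonicity of g where λ₃ is finite
  have hGM : ∀ {u v : S}, u ≤ v → l₃ v ≠ ⊤ → g u ≤ g v := by
    intro u v huv hv
    have hbu : l₃ u ≤ l₃ v := h₃.mono huv
    apply ENNReal.le_sub_of_add_le_right hv
    have key : (m' u - l₃ u) + l₃ v = m' u + (l₃ v - l₃ u) := by
      calc (m' u - l₃ u) + l₃ v = (m' u - l₃ u) + (l₃ u + (l₃ v - l₃ u)) := by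
            rw [add_tsub_cancel_of_le hbu]
        _ = ((m' u - l₃ u) + l₃ u) + (l₃ v - l₃ u) := by rw [add_assoc]
        _ = m' u + (l₃ v - l₃ u) := by rw [tsub_add_cancel_of_le (hl3m' u)]
    calc (m' u - l₃ u) + l₃ v = m' u + (l₃ v - l₃ u) := key
      _ ≤ m' v := hG huv
  -- additivity of g where λ₃ is finite
  have hgadd : ∀ {p q : S}, l₃ p ≠ ⊤ → l₃ q ≠ ⊤ → g (p + q) = g p + g q := by
    intro p q hp hq
    show m' (p + q) - l₃ (p + q) = (m' p - l₃ p) + (m' q - l₃ q)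
    rw [hm'F.map_add, h₃.map_add]
    exact ennreal_split' (hl3m' p) (hl3m' q) hp hq
  -- d is a functional
  have hdF : IsFunctional d := by
    refine ⟨?_, ?_, ?_, ?_⟩
    · exact le_antisymm ((hd1 0).trans_eq h₁.map_zero) zero_le
    · intro a b
      apply le_antisymm
      · -- subadditivity
        refine iSup_le fun p => ?_
        obtain ⟨r, hr⟩ := p
        by_cases h3r : l₃ r = ⊤
        · show m' r - l₃ r ≤ d a + d b
          rw [h3r, ENNReal.sub_top]
          exact zero_le
        · obtain ⟨pa, hpa, hpal⟩ := hS5.O2 a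
          obtain ⟨qb, hqb, hqbl⟩ := hS5.O2 b
          have hpam : Monotone pa := monotone_nat_of_le_succ fun n => cc_le' (hpa n)
          have hqbm : Monotone qb := monotone_nat_of_le_succ fun n => cc_le' (hqb n)
          have hsum_lub : IsLUB (Set.range fun n => pa n + qb n) (a + b) :=
            hS5.O4 pa qb hpam hqbm a b hpal hqbl
          have hmono_sum : Monotone fun n => pa n + qb n := fun i j hij =>
            add_le_add_S hS5 (hpam hij) (hqbm hij)
          obtain ⟨n, hn⟩ := hr _ hmono_sum _ hsum_lub le_rfl
          obtain ⟨w, hw, hwl⟩ := hS5.O2 r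
          have hwm : Monotone w := monotone_nat_of_le_succ fun k => cc_le' (hw k)
          show m' r - l₃ r ≤ d a + d b
          rw [hm'F.map_sup w hwm r hwl, tsub_le_iff_right]
          refine iSup_le fun k => ?_
          rw [← tsub_le_iff_right]
          have hwk : CC (w k) r := cc_of_cc_le' (hw k) (hwl.1 ⟨k+1, rfl⟩)
          obtain ⟨x, y, hxy, hxp, hxr, hyq, hyr⟩ := hS.O6 hn hwk
          have h3x : l₃ x ≠ ⊤ := ne_top_of_le_ne_top h3r (h₃.mono hxr)
          have h3y : l₃ y ≠ ⊤ := ne_top_of_le_ne_top h3r (h₃.mono hyr)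
          have hxa : CC x a := cc_of_le_cc' hxp (cc_of_cc_le' (hpa n) (hpal.1 ⟨n+1, rfl⟩))
          have hyb : CC y b := cc_of_le_cc' hyq (cc_of_cc_le' (hqb n) (hqbl.1 ⟨n+1, rfl⟩))
          have h3xy : l₃ (x + y) ≠ ⊤ := by
            rw [h₃.map_add]; exact ENNReal.add_ne_top.2 ⟨h3x, h3y⟩
          calc m' (w k) - l₃ r ≤ m' (w k) - l₃ (w k) :=
                tsub_le_tsub_left (h₃.mono (cc_le' hwk)) _
            _ ≤ g (x + y) := hGM hxy h3xy
            _ = g x + g y := hgadd h3x h3y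
            _ ≤ d a + d b := add_le_add (hgle hxa) (hgle hyb)
      · -- superadditivity
        haveI : Nonempty {x // CC x a} := ⟨⟨0, cc_zero' hS5 a⟩⟩
        haveI : Nonempty {x // CC x b} := ⟨⟨0, cc_zero' hS5 b⟩⟩
        show d a + d b ≤ d (a + b)
        rw [show d a + d b = ⨆ p : {x // CC x a}, (g p.1 + d b) from ENNReal.iSup_add _]
        refine iSup_le fun p => ?_
        rw [show g p.1 + d b = ⨆ q : {x // CC x b}, (g p.1 + g q.1) from ENNReal.add_iSup _]
        refine iSup_le fun q => ?_
        by_cases h3p : l₃ p.1 = ⊤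
        · have hgp : g p.1 = 0 := by
            show m' p.1 - l₃ p.1 = 0
            rw [h3p, ENNReal.sub_top]
          rw [hgp, zero_add]
          exact hgle (cc_of_cc_le' q.2 (le_add_left_S hS5 a b))
        · by_cases h3q : l₃ q.1 = ⊤
          · have hgq : g q.1 = 0 := by
              show m' q.1 - l₃ q.1 = 0
              rw [h3q, ENNReal.sub_top]
            rw [hgq, add_zero]
            exact hgle (cc_of_cc_le' p.2 (le_add_right_S hS5 a b))
          · rw [← hgadd h3p h3q]
            exact hgle (hS5.O3 p.2 q.2)
    · intro s t hst; exact hdmono hst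
    · intro u hu x hx
      apply le_antisymm
      · refine iSup_le fun p => ?_
        obtain ⟨c, hc1, hc2⟩ := cc_interp' hS5 p.2
        obtain ⟨n, hn⟩ := hc2 u hu x hx le_rfl
        exact le_iSup_of_le n (hgle (cc_of_cc_le' hc1 hn))
      · exact iSup_le fun n => hdmono (hx.1 ⟨n, rfl⟩)
  have hdm : ∀ v, d v ≤ m v := hmmax d hdF hd1 hd2
  intro s
  refine le_antisymm (heasy s) ?_
  calc m' s ≤ d s + l₃ s := hmd s
    _ ≤ m s + l₃ s := add_le_add_left (hdm s) _
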